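/- Let Z ∈ ℝ^{T×d} with V := Z^⊤Z positive definite, let S ∈ ℝ^{T×d}, let Γ ∈ ℝ^{d×d} be invertible, and suppose Γ̂ := Γ + V^{-1} Z^⊤ S is invertible. Then for every θ ∈ ℝ^d and w ∈ ℝ^d, |w^⊤(Γ̂^{-1} − Γ^{-1}) Γ θ| ≤ √(w^⊤(Γ̂^⊤ V Γ̂)^{-1} w) · ‖V^{-1/2} Z^⊤ S‖_op · ‖θ‖₂. -/

import Mathlib

open Matrix

/-- The ℓ₂ operator norm of a square real matrix. -/
noncomputable def l2OpNorm {d : ℕ} (M : Matrix (Fin d) (Fin d) ℝ) : ℝ :=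
  ‖Matrix.toEuclideanCLM (𝕜 := ℝ) M‖

open Classical in
/-- The positive semidefinite square root of a matrix (junk value `0` if the matrix is not
positive semidefinite). -/
noncomputable def matSqrt {d : ℕ} (M : Matrix (Fin d) (Fin d) ℝ) : Matrix (Fin d) (Fin d) ℝ :=
  if h : M.PosSemidef then
    (h.1.eigenvectorUnitary : Matrix (Fin d) (Fin d) ℝ) *
      diagonal ((↑) ∘ Real.sqrt ∘ h.1.eigenvalues) *
      (star h.1.eigenvectorUnitary : Matrix (Fin d) (Fin d) ℝ)
  else 0

set_option synthInstance.maxHeartbeats 800000 in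
lemma mulVec_norm_le {d : ℕ} (M : Matrix (Fin d) (Fin d) ℝ) (θ : Fin d → ℝ) :
    Real.sqrt (∑ i, (M *ᵥ θ) i ^ 2) ≤ l2OpNorm M * Real.sqrt (∑ i, θ i ^ 2) := by
  have key := (toEuclideanCLM (𝕜 := ℝ) M).le_opNorm ((WithLp.equiv 2 _).symm θ)
  rw [show (WithLp.equiv 2 _).symm θ = WithLp.toLp 2 θ from rfl, toEuclideanCLM_toLp] at key
  simpa [EuclideanSpace.norm_eq, Real.norm_eq_abs, sq_abs, l2OpNorm] using key

/-- For `V = Z^⊤Z` positive definite, `Γ` invertible and the least-squares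
estimate `Γ̂ = Γ + V^{-1}Z^⊤S` invertible, for every `θ, w ∈ ℝ^d`:
`|w^⊤(Γ̂^{-1} − Γ^{-1})Γθ| ≤ √(w^⊤(Γ̂^⊤VΓ̂)^{-1}w) ⬝ ‖V^{-1/2}Z^⊤S‖_op ⬝ ‖θ‖₂`. -/
theorem gammaHat_inverse_error_bound {T d : ℕ} (Z S : Matrix (Fin T) (Fin d) ℝ)
    (V : Matrix (Fin d) (Fin d) ℝ) (hV : V = Zᵀ * Z) (hVpd : V.PosDef)
    (Γ Γhat : Matrix (Fin d) (Fin d) ℝ) (hΓ : IsUnit Γ.det)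
    (hΓhat : Γhat = Γ + V⁻¹ * Zᵀ * S) (hΓhatInv : IsUnit Γhat.det)
    (θ w : Fin d → ℝ) :
    |w ⬝ᵥ (((Γhat⁻¹ - Γ⁻¹) * Γ) *ᵥ θ)| ≤
      Real.sqrt (w ⬝ᵥ ((Γhatᵀ * V * Γhat)⁻¹ *ᵥ w))
        * l2OpNorm ((matSqrt V)⁻¹ * Zᵀ * S)
        * Real.sqrt (∑ i, θ i ^ 2) := by
  classical
  set R := matSqrt V with hRdef
  have hps : V.PosSemidef := hVpd.posSemidef
  have hRval : R = (hps.1.eigenvectorUnitary : Matrix (Fin d) (Fin d) ℝ) *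
      diagonal ((↑) ∘ Real.sqrt ∘ hps.1.eigenvalues) *
      (star hps.1.eigenvectorUnitary : Matrix (Fin d) (Fin d) ℝ) := by
    rw [hRdef, matSqrt, dif_pos hps]
  have hRR : R * R = V := by
    rw [hRval]
    conv_rhs => rw [hps.1.spectral_theorem]
    have hU : (star hps.1.eigenvectorUnitary : Matrix (Fin d) (Fin d) ℝ) *
        (hps.1.eigenvectorUnitary : Matrix (Fin d) (Fin d) ℝ) = 1 :=
      Unitary.coe_star_mul_self _
    have hD : diagonal ((↑) ∘ Real.sqrt ∘ hps.1.eigenvalues) *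
        diagonal ((↑) ∘ Real.sqrt ∘ hps.1.eigenvalues) =
        diagonal (RCLike.ofReal ∘ hps.1.eigenvalues : Fin d → ℝ) := by
      rw [diagonal_mul_diagonal]
      congr 1
      funext i
      simp [Real.mul_self_sqrt (hps.eigenvalues_nonneg i)]
    rw [Unitary.conjStarAlgAut_apply]
    calc _ = (hps.1.eigenvectorUnitary : Matrix (Fin d) (Fin d) ℝ) *
          (diagonal ((↑) ∘ Real.sqrt ∘ hps.1.eigenvalues) *
          ((star hps.1.eigenvectorUnitary : Matrix (Fin d) (Fin d) ℝ) *
          (hps.1.eigenvectorUnitary : Matrix (Fin d) (Fin d) ℝ)) *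
          diagonal ((↑) ∘ Real.sqrt ∘ hps.1.eigenvalues)) *
          (star hps.1.eigenvectorUnitary : Matrix (Fin d) (Fin d) ℝ) := by
            simp only [Matrix.mul_assoc]
      _ = _ := by rw [hU, Matrix.mul_one, hD]
  have hRsymm : Rᵀ = R := by
    rw [hRval]
    simp [Matrix.transpose_mul, Matrix.star_eq_conjTranspose, Matrix.mul_assoc]
  have hRdet : IsUnit R.det := by
    have hVdet : V.det ≠ 0 := hVpd.det_pos.ne'
    have : R.det * R.det = V.det := by rw [← det_mul, hRR]
    exact isUnit_iff_ne_zero.mpr (fun h => hVdet (by rw [← this, h, zero_mul]))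
  have hVinv : V⁻¹ = R⁻¹ * R⁻¹ := by rw [← hRR, Matrix.mul_inv_rev]
  -- key matrix identity
  have hkey : (Γhat⁻¹ - Γ⁻¹) * Γ = -((Γhat⁻¹ * R⁻¹) * (R⁻¹ * Zᵀ * S)) := by
    have h1 : (Γhat⁻¹ - Γ⁻¹) * Γ = Γhat⁻¹ * Γ - 1 := by
      rw [sub_mul, Matrix.nonsing_inv_mul Γ hΓ]
    have h2 : Γhat⁻¹ * Γhat = 1 := Matrix.nonsing_inv_mul Γhat hΓhatInv
    have h3 : (Γhat⁻¹ - Γ⁻¹) * Γ = Γhat⁻¹ * (Γ - Γhat) := by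
      rw [mul_sub, h2, h1]
    rw [h3, hΓhat, hVinv, sub_add_cancel_left]
    simp only [mul_neg, Matrix.mul_assoc]
  set A := Γhat⁻¹ * R⁻¹ with hA
  set B := R⁻¹ * Zᵀ * S with hB
  set a := Aᵀ *ᵥ w with ha
  set b := B *ᵥ θ with hb
  have hdot : ∀ (M N : Matrix (Fin d) (Fin d) ℝ) (u v : Fin d → ℝ),
      u ⬝ᵥ (M * N) *ᵥ v = (Mᵀ *ᵥ u) ⬝ᵥ (N *ᵥ v) := by
    intro M N u v
    rw [← mulVec_mulVec, dotProduct_mulVec, mulVec_transpose]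
  have hlhs : |w ⬝ᵥ (((Γhat⁻¹ - Γ⁻¹) * Γ) *ᵥ θ)| = |a ⬝ᵥ b| := by
    rw [hkey, neg_mulVec, dotProduct_neg, abs_neg, hdot]
  -- Cauchy-Schwarz
  have hcs : |a ⬝ᵥ b| ≤ Real.sqrt (∑ i, a i ^ 2) * Real.sqrt (∑ i, b i ^ 2) := by
    have h := Finset.sum_mul_sq_le_sq_mul_sq Finset.univ a b
    have habs : |a ⬝ᵥ b| = Real.sqrt ((∑ i, a i * b i) ^ 2) := by
      rw [Real.sqrt_sq_eq_abs]; rfl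
    rw [habs, ← Real.sqrt_mul (by positivity)]
    exact Real.sqrt_le_sqrt h
  -- first factor
  have hInv : (Γhatᵀ * V * Γhat)⁻¹ = A * Aᵀ := by
    have hRinvT : R⁻¹ᵀ = R⁻¹ := by rw [Matrix.transpose_nonsing_inv, hRsymm]
    rw [hA, ← hRR, Matrix.mul_inv_rev, Matrix.mul_inv_rev, Matrix.mul_inv_rev,
      transpose_mul, ← Matrix.transpose_nonsing_inv, hRinvT]
    simp only [Matrix.mul_assoc]
  have hfac1 : Real.sqrt (w ⬝ᵥ ((Γhatᵀ * V * Γhat)⁻¹ *ᵥ w)) = Real.sqrt (∑ i, a i ^ 2) := by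
    rw [hInv, hdot, ha]
    congr 1
    simp [dotProduct, sq]
  -- second factor
  have hfac2 : Real.sqrt (∑ i, b i ^ 2) ≤ l2OpNorm B * Real.sqrt (∑ i, θ i ^ 2) :=
    mulVec_norm_le B θ
  rw [hlhs, hfac1]
  calc |a ⬝ᵥ b| ≤ Real.sqrt (∑ i, a i ^ 2) * Real.sqrt (∑ i, b i ^ 2) := hcs
    _ ≤ Real.sqrt (∑ i, a i ^ 2) * (l2OpNorm B * Real.sqrt (∑ i, θ i ^ 2)) :=
        mul_le_mul_of_nonneg_left hfac2 (Real.sqrt_nonneg _)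
    _ = Real.sqrt (∑ i, a i ^ 2) * l2OpNorm B * Real.sqrt (∑ i, θ i ^ 2) := by ring
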